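/- Consider the Game of Graph Nim on the graph H₁ (path A–B–C–D with edges AB, BC, CD, plus a disjoint edge EF), with all edge weights positive. If w(BC) > w(EF), then the configuration is a winning position for the first player. -/

import Mathlib

namespace GraphNim

variable {V E : Type} [Fintype E]

/-- A legal move in the Game of Graph Nim: choose a vertex `v` and weakly decrease
the weights of edges incident to `v` (all other edges unchanged), strictly
decreasing the total weight. -/
def Move (inc : V → E → Prop) (w w' : E → ℕ) : Prop :=
  ∃ v : V, (∀ e, w' e ≤ w e) ∧ (∀ e, ¬ inc v e → w' e = w e) ∧
    (∑ e, w' e) < (∑ e, w e)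

/-- A configuration is losing for the player to move: every legal move leads to a
non-losing configuration (the all-zero configuration is vacuously losing). -/
def Losing (inc : V → E → Prop) (w : E → ℕ) : Prop :=
  ∀ w', Move inc w w' → ¬ Losing inc w'
termination_by ∑ e, w e
decreasing_by
  rename_i h
  obtain ⟨v, _, _, h3⟩ := h
  exact h3

/-- A configuration is winning for the player to move: some legal move leads to a
losing configuration. -/
def Winning (inc : V → E → Prop) (w : E → ℕ) : Prop :=
  ∃ w', Move inc w w' ∧ Losing inc w'

end GraphNim

open GraphNim

/-- Endpoints of the edges of the graph `H₁` (path `A–B–C–D` plus a disjoint edge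
`EF`): vertices `A = 0, …, F = 5`, edges `AB = 0, BC = 1, CD = 2, EF = 3`. -/
def h1Ends : Fin 4 → Fin 6 × Fin 6
  | 0 => (0, 1)
  | 1 => (1, 2)
  | 2 => (2, 3)
  | 3 => (4, 5)

def h1Inc (v : Fin 6) (e : Fin 4) : Prop := (h1Ends e).1 = v ∨ (h1Ends e).2 = v

namespace GN

/-! ### A Sprague–Grundy value for Graph Nim configurations -/

variable {V E : Type} [Fintype E]

/-- The Grundy value of a configuration: the minimal excludant of the Grundy
values of all configurations reachable in one move. -/
noncomputable def g (inc : V → E → Prop) (w : E → ℕ) : ℕ :=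
  sInf {n | ¬ ∃ w' : E → ℕ, ∃ hm : Move inc w w', g inc w' = n}
termination_by ∑ e, w e
decreasing_by
  obtain ⟨v, _, _, h3⟩ := hm
  exact h3

/-- The set of Grundy values of positions reachable in one move. -/
def S (inc : V → E → Prop) (w : E → ℕ) : Set ℕ :=
  {n | ∃ w', Move inc w w' ∧ g inc w' = n}

lemma g_def (inc : V → E → Prop) (w : E → ℕ) : g inc w = sInf {n | n ∉ S inc w} := by
  rw [g]; congr 1; ext n; simp [S, exists_prop]

lemma g_le_aux (inc : V → E → Prop) :
    ∀ N, ∀ w : E → ℕ, (∑ e, w e) ≤ N → g inc w ≤ ∑ e, w e := by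
  intro N
  induction N with
  | zero =>
    intro w hw
    rw [g_def]
    apply Nat.sInf_le
    rintro ⟨w', mv, hg⟩
    obtain ⟨v, _, _, h3⟩ := mv
    omega
  | succ N ih =>
    intro w hw
    rw [g_def]
    apply Nat.sInf_le
    rintro ⟨w', mv, hg⟩
    obtain ⟨v, _, _, h3⟩ := mv
    have := ih w' (by omega)
    omega

lemma g_le (inc : V → E → Prop) (w : E → ℕ) : g inc w ≤ ∑ e, w e :=
  g_le_aux inc _ w le_rfl

lemma compl_nonempty (inc : V → E → Prop) (w : E → ℕ) : ∃ n, n ∉ S inc w := by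
  refine ⟨Nat.succ (∑ e, w e), ?_⟩
  rintro ⟨w', mv, hg⟩
  obtain ⟨v, _, _, h3⟩ := mv
  have := g_le inc w'
  omega

/-- The Grundy value of a position is not the Grundy value of any successor. -/
lemma g_notin (inc : V → E → Prop) (w : E → ℕ) : g inc w ∉ S inc w := by
  rw [g_def]
  exact Nat.sInf_mem (compl_nonempty inc w)

/-- Every value smaller than the Grundy value is realized by some successor. -/
lemma mem_of_lt_g {inc : V → E → Prop} {w : E → ℕ} {m : ℕ} (h : m < g inc w) :
    m ∈ S inc w := by
  by_contra hm
  rw [g_def] at h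
  have : sInf {n | n ∉ S inc w} ≤ m := Nat.sInf_le hm
  omega

lemma g_eq {inc : V → E → Prop} {w : E → ℕ} {x : ℕ}
    (h1 : ∀ m, m < x → m ∈ S inc w) (h2 : x ∉ S inc w) : g inc w = x := by
  rcases lt_trichotomy (g inc w) x with h | h | h
  · exact absurd (h1 _ h) (g_notin inc w)
  · exact h
  · exact absurd (mem_of_lt_g h) h2

lemma losing_unfold (inc : V → E → Prop) (w : E → ℕ) :
    Losing inc w ↔ ∀ w', Move inc w w' → ¬ Losing inc w' := by rw [Losing]

lemma losing_iff_aux (inc : V → E → Prop) :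
    ∀ N, ∀ w : E → ℕ, (∑ e, w e) ≤ N → (Losing inc w ↔ g inc w = 0) := by
  intro N
  induction N with
  | zero =>
    intro w hw
    constructor
    · intro _
      by_contra hg
      obtain ⟨w', mv, _⟩ := mem_of_lt_g (show 0 < g inc w by omega)
      obtain ⟨v, _, _, h3⟩ := mv
      omega
    · intro _
      rw [losing_unfold]
      intro w' mv
      obtain ⟨v, _, _, h3⟩ := mv
      omega
  | succ N ih =>
    intro w hw
    constructor
    · intro hl
      by_contra hg
      obtain ⟨w', mv, hg0⟩ := mem_of_lt_g (show 0 < g inc w by omega)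
      have hsum : (∑ e, w' e) < ∑ e, w e := by obtain ⟨v, _, _, h3⟩ := mv; exact h3
      have : Losing inc w' := (ih w' (by omega)).mpr hg0
      exact (losing_unfold inc w |>.mp hl) w' mv this
    · intro hg
      rw [losing_unfold]
      intro w' mv hl'
      have hsum : (∑ e, w' e) < ∑ e, w e := by obtain ⟨v, _, _, h3⟩ := mv; exact h3
      have hg0 : g inc w' = 0 := (ih w' (by omega)).mp hl'
      exact g_notin inc w (hg ▸ ⟨w', mv, hg0⟩)

lemma losing_iff (inc : V → E → Prop) (w : E → ℕ) : Losing inc w ↔ g inc w = 0 :=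
  losing_iff_aux inc _ w le_rfl

/-- A configuration is winning iff its Grundy value is nonzero. -/
lemma winning_iff (inc : V → E → Prop) (w : E → ℕ) : Winning inc w ↔ g inc w ≠ 0 := by
  constructor
  · rintro ⟨w', mv, hl⟩ hg
    exact g_notin inc w (hg ▸ ⟨w', mv, (losing_iff inc w').mp hl⟩)
  · intro hg
    obtain ⟨w', mv, hg0⟩ := mem_of_lt_g (show 0 < g inc w by omega)
    exact ⟨w', mv, (losing_iff inc w').mpr hg0⟩

/-! ### The path `A–B–C–D` on its own -/

def ends3 : Fin 3 → Fin 4 × Fin 4 := ![(0,1),(1,2),(2,3)]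
def inc3 (v : Fin 4) (e : Fin 3) : Prop := (ends3 e).1 = v ∨ (ends3 e).2 = v

instance (v : Fin 4) (e : Fin 3) : Decidable (inc3 v e) := by unfold inc3; infer_instance
instance (v : Fin 6) (e : Fin 4) : Decidable (h1Inc v e) := by unfold h1Inc; infer_instance

lemma vec3_eta (p : Fin 3 → ℕ) : p = ![p 0, p 1, p 2] := by
  funext i; fin_cases i <;> rfl

lemma vec4_eta (p : Fin 4 → ℕ) : p = ![p 0, p 1, p 2, p 3] := by
  funext i; fin_cases i <;> rfl

lemma move3_B {a b c a' b' : ℕ} (h0 : a' ≤ a) (h1 : b' ≤ b) (hs : a' + b' < a + b) :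
    Move inc3 ![a, b, c] ![a', b', c] := by
  refine ⟨1, ?_, ?_, ?_⟩
  · intro e; fin_cases e <;> simp [h0, h1]
  · intro e he; fin_cases e
    · exact absurd (by simp [inc3, ends3]) he
    · exact absurd (by simp [inc3, ends3]) he
    · rfl
  · simp [Fin.sum_univ_three]; omega

lemma move3_C {a b c b' c' : ℕ} (h1 : b' ≤ b) (h2 : c' ≤ c) (hs : b' + c' < b + c) :
    Move inc3 ![a, b, c] ![a, b', c'] := by
  refine ⟨2, ?_, ?_, ?_⟩
  · intro e; fin_cases e <;> simp [h1, h2]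
  · intro e he; fin_cases e
    · rfl
    · exact absurd (by simp [inc3, ends3]) he
    · exact absurd (by simp [inc3, ends3]) he
  · simp [Fin.sum_univ_three]; omega

lemma move3_elim {w w' : Fin 3 → ℕ} (h : Move inc3 w w') :
    ((w' 0 ≤ w 0 ∧ w' 1 ≤ w 1 ∧ w' 2 = w 2) ∨
     (w' 0 = w 0 ∧ w' 1 ≤ w 1 ∧ w' 2 ≤ w 2)) ∧
    w' 0 + w' 1 + w' 2 < w 0 + w 1 + w 2 := by
  obtain ⟨v, h1, h2, h3⟩ := h
  rw [Fin.sum_univ_three, Fin.sum_univ_three] at h3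
  refine ⟨?_, h3⟩
  fin_cases v
  · left; exact ⟨h1 0, h1 1, h2 2 (by simp [inc3, ends3])⟩
  · left; exact ⟨h1 0, h1 1, h2 2 (by simp [inc3, ends3])⟩
  · right; exact ⟨h2 0 (by simp [inc3, ends3]), h1 1, h1 2⟩
  · right; exact ⟨h2 0 (by simp [inc3, ends3]), h1 1, h1 2⟩

lemma move3_promote {a b c v : ℕ} (hvb : v ≤ b) {q : Fin 3 → ℕ}
    (h : Move inc3 ![a, v, c] q) : Move inc3 ![a, b, c] q := by
  obtain ⟨hcase, hsum⟩ := move3_elim h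
  simp only [Matrix.cons_val_zero, Matrix.cons_val_one, Matrix.head_cons,
    Matrix.cons_val_two, Matrix.tail_cons] at hcase hsum
  rw [vec3_eta q]
  rcases hcase with ⟨g0, g1, g2⟩ | ⟨g0, g1, g2⟩
  · rw [g2]; exact move3_B g0 (le_trans g1 hvb) (by omega)
  · rw [g0]; exact move3_C (le_trans g1 hvb) g2 (by omega)

/-! ### Relating moves on `H₁` to moves on the path and on the extra edge -/

lemma move4_path {p q : Fin 3 → ℕ} (d : ℕ) (h : Move inc3 p q) :
    Move h1Inc ![p 0, p 1, p 2, d] ![q 0, q 1, q 2, d] := by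
  obtain ⟨v, h1, h2, h3⟩ := h
  rw [Fin.sum_univ_three, Fin.sum_univ_three] at h3
  refine ⟨⟨v.1, by omega⟩, ?_, ?_, ?_⟩
  · intro e; fin_cases e
    · exact h1 0
    · exact h1 1
    · exact h1 2
    · exact le_rfl
  · intro e he
    fin_cases v <;> fin_cases e <;>
      first
        | rfl
        | exact h2 0 (by decide)
        | exact h2 1 (by decide)
        | exact h2 2 (by decide)
        | exact (he (Or.inl rfl)).elim
        | exact (he (Or.inr rfl)).elim
  · simp only [Fin.sum_univ_four, Matrix.cons_val_zero, Matrix.cons_val_one,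
      Matrix.head_cons, Matrix.cons_val_two, Matrix.tail_cons, Matrix.cons_val_three]
    omega

lemma move4_d {p : Fin 3 → ℕ} {d d' : ℕ} (h : d' < d) :
    Move h1Inc ![p 0, p 1, p 2, d] ![p 0, p 1, p 2, d'] := by
  refine ⟨4, ?_, ?_, ?_⟩
  · intro e; fin_cases e
    · exact le_rfl
    · exact le_rfl
    · exact le_rfl
    · exact le_of_lt h
  · intro e he; fin_cases e
    · rfl
    · rfl
    · rfl
    · exact (he (by decide)).elim
  · simp only [Fin.sum_univ_four, Matrix.cons_val_zero, Matrix.cons_val_one,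
      Matrix.head_cons, Matrix.cons_val_two, Matrix.tail_cons, Matrix.cons_val_three]
    omega

lemma move4_elim {w w' : Fin 4 → ℕ} (h : Move h1Inc w w') :
    (w' 3 = w 3 ∧ Move inc3 ![w 0, w 1, w 2] ![w' 0, w' 1, w' 2]) ∨
    (w' 0 = w 0 ∧ w' 1 = w 1 ∧ w' 2 = w 2 ∧ w' 3 < w 3) := by
  obtain ⟨v, h1, h2, h3⟩ := h
  rw [Fin.sum_univ_four, Fin.sum_univ_four] at h3
  have build : ∀ vv : Fin 4,
      (∀ e : Fin 3, ¬ inc3 vv e →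
        w' (Fin.castLE (by omega) e) = w (Fin.castLE (by omega) e)) →
      w' 3 = w 3 →
      (w' 3 = w 3 ∧ Move inc3 ![w 0, w 1, w 2] ![w' 0, w' 1, w' 2]) ∨
      (w' 0 = w 0 ∧ w' 1 = w 1 ∧ w' 2 = w 2 ∧ w' 3 < w 3) := by
    intro vv hoff h33
    left
    refine ⟨h33, vv, ?_, ?_, ?_⟩
    · intro e; fin_cases e
      · exact h1 0
      · exact h1 1
      · exact h1 2
    · intro e he; fin_cases e
      · exact hoff 0 he
      · exact hoff 1 he
      · exact hoff 2 he
    · simp only [Fin.sum_univ_three, Matrix.cons_val_zero, Matrix.cons_val_one,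
        Matrix.head_cons, Matrix.cons_val_two, Matrix.tail_cons]
      omega
  fin_cases v
  · refine build 0 ?_ (h2 3 (by decide))
    intro e he; fin_cases e
    · exact (he (by decide)).elim
    · exact h2 1 (by decide)
    · exact h2 2 (by decide)
  · refine build 1 ?_ (h2 3 (by decide))
    intro e he; fin_cases e
    · exact (he (by decide)).elim
    · exact (he (by decide)).elim
    · exact h2 2 (by decide)
  · refine build 2 ?_ (h2 3 (by decide))
    intro e he; fin_cases e
    · exact h2 0 (by decide)
    · exact (he (by decide)).elim
    · exact (he (by decide)).elim
  · refine build 3 ?_ (h2 3 (by decide))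
    intro e he; fin_cases e
    · exact h2 0 (by decide)
    · exact h2 1 (by decide)
    · exact (he (by decide)).elim
  · right
    refine ⟨h2 0 (by decide), h2 1 (by decide), h2 2 (by decide), ?_⟩
    have h00 := h2 0 (by decide); have h11 := h2 1 (by decide); have h22 := h2 2 (by decide)
    omega
  · right
    refine ⟨h2 0 (by decide), h2 1 (by decide), h2 2 (by decide), ?_⟩
    have h00 := h2 0 (by decide); have h11 := h2 1 (by decide); have h22 := h2 2 (by decide)
    omega

/-! ### Nim values when the middle edge is empty -/

lemma g3_nim_aux : ∀ N, ∀ x y : ℕ, x + y ≤ N → g inc3 ![x, 0, y] = x ^^^ y := by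
  intro N
  induction N with
  | zero =>
    intro x y hxy
    have hx : x = 0 := by omega
    have hy : y = 0 := by omega
    subst hx; subst hy
    apply g_eq
    · intro m hm; simp at hm
    · rintro ⟨w', mv, hg⟩
      obtain ⟨_, hsum⟩ := move3_elim mv
      simp only [Matrix.cons_val_zero, Matrix.cons_val_one, Matrix.head_cons,
        Matrix.cons_val_two, Matrix.tail_cons] at hsum
      omega
  | succ N ih =>
    intro x y hxy
    apply g_eq
    · intro m hm
      rcases Nat.lt_xor_cases hm with hx | hy
      · refine ⟨![m ^^^ y, 0, y], move3_B (le_of_lt hx) le_rfl (by omega), ?_⟩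
        rw [ih (m ^^^ y) y (by omega), xor_cancel_right]
      · refine ⟨![x, 0, m ^^^ x], move3_C le_rfl (le_of_lt hy) (by omega), ?_⟩
        rw [ih x (m ^^^ x) (by omega), Nat.xor_comm x (m ^^^ x), xor_cancel_right]
    · rintro ⟨w', mv, hg⟩
      obtain ⟨hcase, hsum⟩ := move3_elim mv
      simp only [Matrix.cons_val_zero, Matrix.cons_val_one, Matrix.head_cons,
        Matrix.cons_val_two, Matrix.tail_cons] at hcase hsum
      rw [vec3_eta w'] at hg
      rcases hcase with ⟨g0, g1, g2⟩ | ⟨g0, g1, g2⟩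
      · have hb : w' 1 = 0 := by omega
        have h0 : w' 0 < x := by omega
        rw [hb, g2, ih (w' 0) y (by omega)] at hg
        have : w' 0 = x := by
          have := congrArg (· ^^^ y) hg
          simpa [xor_cancel_right] using this
        omega
      · have hb : w' 1 = 0 := by omega
        have h2c : w' 2 < y := by omega
        rw [hb, g0, ih x (w' 2) (by omega)] at hg
        have : w' 2 = y := Nat.xor_right_injective hg
        omega

lemma g3_nim (x y : ℕ) : g inc3 ![x, 0, y] = x ^^^ y :=
  g3_nim_aux (x + y) x y le_rfl

/-! ### Grundy value of `H₁` decomposes as path ⊕ extra edge -/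

lemma g4_decomp_aux : ∀ N, ∀ a b c d : ℕ, a + b + c + d ≤ N →
    g h1Inc ![a, b, c, d] = g inc3 ![a, b, c] ^^^ d := by
  intro N
  induction N with
  | zero =>
    intro a b c d h
    have ha : a = 0 := by omega
    have hb : b = 0 := by omega
    have hc : c = 0 := by omega
    have hd : d = 0 := by omega
    subst ha; subst hb; subst hc; subst hd
    apply g_eq
    · intro m hm
      rw [g3_nim] at hm
      simp at hm
    · rintro ⟨w', mv, hg⟩
      obtain ⟨v, _, _, h3⟩ := mv
      rw [Fin.sum_univ_four, Fin.sum_univ_four] at h3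
      simp only [Matrix.cons_val_zero, Matrix.cons_val_one, Matrix.head_cons,
        Matrix.cons_val_two, Matrix.tail_cons, Matrix.cons_val_three] at h3
      omega
  | succ N ih =>
    intro a b c d hN
    apply g_eq
    · intro m hm
      rcases Nat.lt_xor_cases hm with hx | hd
      · -- reduce the path part to Grundy value m ^^^ d
        obtain ⟨p, mp, hp⟩ := mem_of_lt_g hx
        have hps : p 0 + p 1 + p 2 < a + b + c := (move3_elim mp).2
        refine ⟨![p 0, p 1, p 2, d], move4_path d mp, ?_⟩
        rw [ih (p 0) (p 1) (p 2) d (by omega), ← vec3_eta p, hp, xor_cancel_right]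
      · -- reduce the extra edge to m ^^^ (path Grundy value)
        refine ⟨![a, b, c, m ^^^ g inc3 ![a, b, c]],
          move4_d (p := ![a, b, c]) hd, ?_⟩
        rw [ih a b c (m ^^^ g inc3 ![a, b, c]) (by omega),
          Nat.xor_comm m (g inc3 ![a, b, c]), ← Nat.xor_assoc, Nat.xor_self, Nat.zero_xor]
    · rintro ⟨w', mv, hg⟩
      have hsum : w' 0 + w' 1 + w' 2 + w' 3 < a + b + c + d := by
        obtain ⟨v, _, _, h3⟩ := mv
        rw [Fin.sum_univ_four, Fin.sum_univ_four] at h3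
        simpa using h3
      have hw' : g h1Inc w' = g inc3 ![w' 0, w' 1, w' 2] ^^^ w' 3 := by
        rw [vec4_eta w']
        exact ih (w' 0) (w' 1) (w' 2) (w' 3) (by omega)
      rcases move4_elim mv with ⟨h33, mv3⟩ | ⟨e0, e1, e2, hlt⟩
      · have h33' : w' 3 = d := h33
        have mv3' : Move inc3 ![a, b, c] ![w' 0, w' 1, w' 2] := mv3
        rw [hw', h33'] at hg
        have : g inc3 ![w' 0, w' 1, w' 2] = g inc3 ![a, b, c] := by
          have := congrArg (· ^^^ d) hg
          simpa [xor_cancel_right] using this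
        exact g_notin inc3 ![a, b, c] ⟨![w' 0, w' 1, w' 2], mv3', this⟩
      · have e0' : w' 0 = a := e0
        have e1' : w' 1 = b := e1
        have e2' : w' 2 = c := e2
        have hlt' : w' 3 < d := hlt
        rw [hw', e0', e1', e2'] at hg
        have : w' 3 = d := Nat.xor_right_injective hg
        omega

lemma g4_decomp (a b c d : ℕ) :
    g h1Inc ![a, b, c, d] = g inc3 ![a, b, c] ^^^ d :=
  g4_decomp_aux (a + b + c + d) a b c d le_rfl

/-! ### Values below the middle weight are all realized by moves on the path -/

lemma plemma : ∀ b a c v : ℕ, v < b →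
    ∃ p, Move inc3 ![a, b, c] p ∧ g inc3 p = v := by
  intro b
  induction b using Nat.strong_induction_on with
  | _ b ih =>
    intro a c v hv
    rcases Nat.eq_zero_or_pos v with rfl | hv1
    · by_cases hca : c ≤ a
      · exact ⟨![c, 0, c], move3_B hca (Nat.zero_le _) (by omega),
          by rw [g3_nim, Nat.xor_self]⟩
      · exact ⟨![a, 0, a], move3_C (Nat.zero_le _) (le_of_lt (not_le.mp hca)) (by omega),
          by rw [g3_nim, Nat.xor_self]⟩
    · have hge : v ≤ g inc3 ![a, v, c] := by
        by_contra hlt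
        push_neg at hlt
        obtain ⟨p, mp, hp⟩ := ih v hv a c (g inc3 ![a, v, c]) hlt
        exact g_notin inc3 ![a, v, c] ⟨p, mp, hp⟩
      rcases eq_or_lt_of_le hge with heq | hlt
      · exact ⟨![a, v, c], move3_B le_rfl (le_of_lt hv) (by omega), heq.symm⟩
      · obtain ⟨q, mq, hq⟩ := mem_of_lt_g hlt
        exact ⟨q, move3_promote (le_of_lt hv) mq, hq⟩

end GN

/-- On `H₁` with all weights positive, if `w(BC) > w(EF)` then the configuration
is winning for the first player. -/
theorem h1_winning_bc_gt (w : Fin 4 → ℕ) (hpos : ∀ e, 0 < w e)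
    (h : w 1 > w 3) :
    Winning h1Inc w := by
  have key : GN.g GN.inc3 ![w 0, w 1, w 2] ≠ w 3 := by
    intro heq
    obtain ⟨p, mp, hp⟩ := GN.plemma (w 1) (w 0) (w 2) (w 3) h
    exact GN.g_notin GN.inc3 ![w 0, w 1, w 2] ⟨p, mp, by rw [hp, heq]⟩
  apply (GN.winning_iff h1Inc w).mpr
  rw [GN.vec4_eta w, GN.g4_decomp]
  intro h0
  exact key (xor_eq_zero_iff.mp h0)
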